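/- Let f : ℕ^k → ℕ be a ℚ≥0-linear function, i.e., f(m) = Σ_{i=1}^k ⌊ci·m(i)⌋ for constants c1,…,ck ∈ ℚ with ci ≥ 0. Let E : ℕ → ℕ be the identity function. Then there exists a function-approximating leaderless population protocol A = (Λ, δ, Σ, y, q, a) that stably E-approximates f: there exist a0 ∈ ℕ and a linearly bounded function q0 : ℕ^{k+1} → ℕ such that for every initial configuration i ∈ ℕ^Λ with i restricted to Σ equal to m, i(a) ≥ a0, i(q) ≥ q0(m, i(a)), and i(s) = 0 for all s ∈ Λ ∖ (Σ ∪ {q, a}), every configuration c reachable from i can reach a stable configuration o with |o(y) − f(m)| ≤ i(a). -/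
import Mathlib


/-! Basic definitions for (leaderless) population protocols:
configurations, transitions, paths, reachability, bottlenecks, stability. -/

namespace PP

variable {Λ : Type*}

open Classical in
/-- The configuration consisting of a single agent in state `s`. -/
noncomputable def single (s : Λ) : Λ → ℕ := fun t => if t = s then 1 else 0

/-- The configuration consisting of the two agents of the ordered pair `r`. -/
noncomputable def pairConf (r : Λ × Λ) : Λ → ℕ := single r.1 + single r.2

/-- The transition with input pair `r` is applicable to configuration `c`. -/
def Applicable (c : Λ → ℕ) (r : Λ × Λ) : Prop := pairConf r ≤ c

/-- The result of applying the transition with inputs `r` (and outputs `δ r`) to `c`. -/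
noncomputable def applyTx (δ : Λ × Λ → Λ × Λ) (r : Λ × Λ) (c : Λ → ℕ) : Λ → ℕ :=
  c - pairConf r + pairConf (δ r)

/-- `PathFrom δ c p c'`: executing the transition sequence `p` (each transition given
by its ordered pair of input states) from `c` is valid and ends in `c'`. -/
inductive PathFrom (δ : Λ × Λ → Λ × Λ) : (Λ → ℕ) → List (Λ × Λ) → (Λ → ℕ) → Prop
  | nil (c : Λ → ℕ) : PathFrom δ c [] c
  | cons {c c' : Λ → ℕ} (r : Λ × Λ) {p : List (Λ × Λ)} :
      Applicable c r → PathFrom δ (applyTx δ r c) p c' → PathFrom δ c (r :: p) c'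

/-- `Reach δ c c'` means `c ⟹ c'`: some finite path leads from `c` to `c'`. -/
def Reach (δ : Λ × Λ → Λ × Λ) (c c' : Λ → ℕ) : Prop := ∃ p, PathFrom δ c p c'

/-- `NoBottleneck δ b c p`: no transition of path `p` executed from `c` is a
`b`-bottleneck for the configuration to which it is applied. -/
inductive NoBottleneck (δ : Λ × Λ → Λ × Λ) (b : ℕ) : (Λ → ℕ) → List (Λ × Λ) → Prop
  | nil (c : Λ → ℕ) : NoBottleneck δ b c []
  | cons {c : Λ → ℕ} (r : Λ × Λ) {p : List (Λ × Λ)} :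
      ¬(c r.1 ≤ b ∧ c r.2 ≤ b) → NoBottleneck δ b (applyTx δ r c) p →
      NoBottleneck δ b c (r :: p)

/-- A configuration is stable w.r.t. output state `y` if the count of `y` can never
change again. -/
def Stable (δ : Λ × Λ → Λ × Λ) (y : Λ) (o : Λ → ℕ) : Prop :=
  ∀ o', Reach δ o o' → o' y = o y

/-- The transition function is symmetric. -/
def Symmetric (δ : Λ × Λ → Λ × Λ) : Prop :=
  ∀ r1 r2 : Λ, δ (r2, r1) = ((δ (r1, r2)).2, (δ (r1, r2)).1)

end PP

open Finset


namespace Stmt17Aux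

open PP Finset
open scoped Classical

variable {Λ : Type*}

lemma reach_refl (δ : Λ × Λ → Λ × Λ) (c : Λ → ℕ) : Reach δ c c := ⟨[], .nil c⟩

lemma pathFrom_append {δ : Λ × Λ → Λ × Λ} {c c' c'' : Λ → ℕ} {p p' : List (Λ × Λ)}
    (h : PathFrom δ c p c') (h' : PathFrom δ c' p' c'') : PathFrom δ c (p ++ p') c'' := by
  induction h with
  | nil => exact h'
  | cons r ha _ ih => exact .cons r ha (ih h')

lemma reach_trans {δ : Λ × Λ → Λ × Λ} {c c' c'' : Λ → ℕ}
    (h : Reach δ c c') (h' : Reach δ c' c'') : Reach δ c c'' := by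
  obtain ⟨p, hp⟩ := h; obtain ⟨p', hp'⟩ := h'
  exact ⟨p ++ p', pathFrom_append hp hp'⟩

lemma reach_step {δ : Λ × Λ → Λ × Λ} {c : Λ → ℕ} {r : Λ × Λ} (h : Applicable c r) :
    Reach δ c (applyTx δ r c) := ⟨[r], .cons r h (.nil _)⟩

lemma pairConf_apply (r : Λ × Λ) (s : Λ) :
    pairConf r s = (if s = r.1 then 1 else 0) + (if s = r.2 then 1 else 0) := by
  simp [pairConf, single]

lemma pairConf_swap (a b : Λ) : pairConf (a, b) = pairConf (b, a) := by
  funext s; simp [pairConf_apply]; omega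

lemma applicable_of_ne {c : Λ → ℕ} {x y : Λ} (h : x ≠ y) (hx : 1 ≤ c x) (hy : 1 ≤ c y) :
    Applicable c (x, y) := by
  intro s
  rw [pairConf_apply]
  by_cases h1 : s = x <;> by_cases h2 : s = y <;> subst_eqs <;> simp_all <;> omega

lemma applicable_same {c : Λ → ℕ} {x : Λ} (hx : 2 ≤ c x) : Applicable c (x, x) := by
  intro s
  rw [pairConf_apply]
  by_cases h1 : s = x <;> subst_eqs <;> simp_all

lemma applyTx_apply {δ : Λ × Λ → Λ × Λ} {c : Λ → ℕ} {r : Λ × Λ} (h : Applicable c r) (s : Λ) :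
    applyTx δ r c s + pairConf r s = c s + pairConf (δ r) s := by
  have : pairConf r s ≤ c s := h s
  simp only [applyTx, Pi.add_apply, Pi.sub_apply]
  omega

lemma applyTx_eq_self {δ : Λ × Λ → Λ × Λ} {c : Λ → ℕ} {r : Λ × Λ} (h : Applicable c r)
    (hid : δ r = r) : applyTx δ r c = c := by
  funext s
  have := applyTx_apply (δ := δ) h s
  rw [hid] at this
  omega

section Wsum

variable [Fintype Λ]

/-- Weighted count of a configuration. -/
def wsum (ω : Λ → ℕ) (c : Λ → ℕ) : ℕ := ∑ s, ω s * c s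

lemma wsum_le {ω u c : Λ → ℕ} (h : u ≤ c) : wsum ω u ≤ wsum ω c :=
  Finset.sum_le_sum fun s _ => Nat.mul_le_mul_left _ (h s)

lemma wsum_single (ω : Λ → ℕ) (s : Λ) : wsum ω (single s) = ω s := by
  classical
  rw [wsum]
  rw [Finset.sum_eq_single s]
  · simp [single]
  · intro t _ ht; simp [single, ht]
  · simp

lemma wsum_pairConf (ω : Λ → ℕ) (r : Λ × Λ) : wsum ω (pairConf r) = ω r.1 + ω r.2 := by
  have : wsum ω (pairConf r) = wsum ω (single r.1) + wsum ω (single r.2) := by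
    simp [wsum, pairConf, Finset.sum_add_distrib, Nat.mul_add]
  rw [this, wsum_single, wsum_single]

lemma wsum_applyTx {δ : Λ × Λ → Λ × Λ} {c : Λ → ℕ} {r : Λ × Λ} (h : Applicable c r) (ω : Λ → ℕ) :
    wsum ω (applyTx δ r c) + (ω r.1 + ω r.2) = wsum ω c + (ω (δ r).1 + ω (δ r).2) := by
  rw [← wsum_pairConf ω r, ← wsum_pairConf ω (δ r)]
  have : ∀ s, ω s * applyTx δ r c s + ω s * pairConf r s = ω s * c s + ω s * pairConf (δ r) s := by
    intro s
    have := applyTx_apply (δ := δ) h s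
    nlinarith [applyTx_apply (δ := δ) h s]
  simp only [wsum, ← Finset.sum_add_distrib]
  exact Finset.sum_congr rfl fun s _ => this s

lemma pairConf_le_iff {c : Λ → ℕ} {r : Λ × Λ} : Applicable c r ↔ ∀ s, pairConf r s ≤ c s :=
  Iff.rfl

/-- Extract two (possibly equal) states of positive weight from a config with weighted
count at least 2, for a 0/1 weight function. -/
lemma exists_pair_of_two_le_wsum {ω c : Λ → ℕ} (hω : ∀ s, ω s ≤ 1) (h : 2 ≤ wsum ω c) :
    ∃ s t : Λ, 1 ≤ ω s ∧ 1 ≤ ω t ∧ Applicable c (s, t) := by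
  classical
  have h1 : ∃ s, 1 ≤ ω s * c s := by
    by_contra hno
    push_neg at hno
    have : wsum ω c = 0 := Finset.sum_eq_zero fun s _ => by have := hno s; omega
    omega
  obtain ⟨s, hs⟩ := h1
  have hωs : 1 ≤ ω s := by by_contra h'; push_neg at h'; interval_cases h : ω s <;> omega
  have hcs : 1 ≤ c s := by nlinarith [hω s]
  by_cases h2 : 2 ≤ c s
  · exact ⟨s, s, hωs, hωs, applicable_same h2⟩
  · have hcs1 : c s = 1 := by omega
    have hsum : wsum ω c = ω s * c s + ∑ t ∈ Finset.univ.erase s, ω t * c t := by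
      rw [wsum, ← Finset.add_sum_erase _ _ (Finset.mem_univ s)]
    have hrest : 1 ≤ ∑ t ∈ Finset.univ.erase s, ω t * c t := by
      have := hω s; nlinarith
    have h1' : ∃ t ∈ Finset.univ.erase s, 1 ≤ ω t * c t := by
      by_contra hno
      push_neg at hno
      have : ∑ t ∈ Finset.univ.erase s, ω t * c t = 0 :=
        Finset.sum_eq_zero fun t ht => by have := hno t ht; omega
      omega
    obtain ⟨t, ht, htp⟩ := h1'
    have hts : t ≠ s := Finset.ne_of_mem_erase ht
    have hωt : 1 ≤ ω t := by by_contra h'; push_neg at h'; interval_cases h : ω t <;> omega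
    have hct : 1 ≤ c t := by nlinarith [hω t]
    exact ⟨s, t, hωs, hωt, applicable_of_ne (Ne.symm hts) hcs hct⟩

end Wsum

end Stmt17Aux

namespace Stmt17Aux

open PP Finset
open scoped Classical

section Proto

variable {k : ℕ} (d n : Fin k → ℕ)

/-- Bound on token values. -/
def NN : ℕ := ∑ i, (n i + 2 * d i)

lemma add_two_d_le_NN (i : Fin k) : n i + 2 * d i ≤ NN d n := by
  have h := Finset.single_le_sum (f := fun i => n i + 2 * d i)
    (fun _ _ => Nat.zero_le _) (Finset.mem_univ i)
  simpa [NN] using h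

lemma two_d_le_NN (i : Fin k) : 2 * d i ≤ NN d n := by
  have := add_two_d_le_NN d n i; omega

lemma n_le_NN (i : Fin k) : n i ≤ NN d n := by
  have := add_two_d_le_NN d n i; omega

/-- State space: tokens `(i, value, charged)` plus three special states. -/
abbrev St := (Fin k × Fin (NN d n + 1) × Bool) ⊕ Fin 3

def qstate : St d n := .inr 0
def astate : St d n := .inr 1
def ystate : St d n := .inr 2

/-- Oriented transition rules. -/
def act : St d n → St d n → Option (St d n × St d n)
  | .inl (i, v, b), .inr f =>
    if f = 0 then
      if d i ≤ v.val then
        some (.inl (i, ⟨v.val - d i, by have := v.isLt; omega⟩, b), .inr 2)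
      else if 1 ≤ v.val then some (.inl (i, v, !b), .inr 0)
      else none
    else none
  | .inl (i, s, true), .inl (j, t, false) =>
    if h : i = j ∧ 1 ≤ s.val ∧ s.val < d i ∧ 1 ≤ t.val ∧ t.val < d i then
      some (.inl (i, ⟨s.val + t.val, by
        have := two_d_le_NN d n i; omega⟩, false), .inr 0)
    else none
  | _, _ => none

/-- The transition function. -/
noncomputable def del : St d n × St d n → St d n × St d n :=
  fun p => ((act d n p.1 p.2).or ((act d n p.2 p.1).map Prod.swap)).getD p

lemma act_asym {x y : St d n} {p : St d n × St d n} (h : act d n x y = some p) :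
    act d n y x = none := by
  rcases x with ⟨i, v, b⟩ | f <;> rcases y with ⟨j, w, b'⟩ | g
  · -- inl, inl
    rcases b <;> rcases b' <;> simp [act] at h ⊢
  · rcases b <;> rfl
  · simp [act] at h
  · simp [act] at h

lemma del_of_act {x y : St d n} {p : St d n × St d n} (h : act d n x y = some p) :
    del d n (x, y) = p := by
  simp [del, h]

lemma del_of_act' {x y : St d n} {p : St d n × St d n} (h : act d n x y = some p) :
    del d n (y, x) = p.swap := by
  simp [del, act_asym d n h, h]

lemma del_id {x y : St d n} (h1 : act d n x y = none) (h2 : act d n y x = none) :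
    del d n (x, y) = (x, y) := by
  simp [del, h1, h2]

lemma del_symmetric : PP.Symmetric (del d n) := by
  intro r1 r2
  rcases h1 : act d n r1 r2 with _ | p
  · rcases h2 : act d n r2 r1 with _ | p
    · rw [del_id d n h1 h2, del_id d n h2 h1]
    · rw [del_of_act d n h2, del_of_act' d n h2]
      simp [Prod.swap]
  · rw [del_of_act d n h1, del_of_act' d n h1]
    simp [Prod.swap]

/-- Classification of transitions up to unordered pair content. -/
lemma del_cases (r : St d n × St d n) :
    del d n r = r ∨ ∃ x y p, act d n x y = some p ∧
      pairConf r = pairConf (x, y) ∧ pairConf (del d n r) = pairConf p := by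
  rcases h1 : act d n r.1 r.2 with _ | p
  · rcases h2 : act d n r.2 r.1 with _ | p
    · left
      have : r = (r.1, r.2) := rfl
      rw [this, del_id d n h1 h2]
    · right
      refine ⟨r.2, r.1, p, h2, ?_, ?_⟩
      · exact pairConf_swap r.1 r.2
      · have : del d n r = p.swap := del_of_act' d n h2
        rw [this]
        exact pairConf_swap p.2 p.1
  · right
    exact ⟨r.1, r.2, p, h1, rfl, by rw [show del d n r = p from del_of_act d n h1]⟩

/-- Shapes of firing rules. -/
lemma act_shapes {x y : St d n} {p : St d n × St d n} (h : act d n x y = some p) :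
    (∃ (i : Fin k) (v : Fin (NN d n + 1)) (b : Bool) (_ : d i ≤ v.val), x = .inl (i, v, b) ∧
      y = qstate d n ∧
      p = (.inl (i, ⟨v.val - d i, by have := v.isLt; omega⟩, b), ystate d n)) ∨
    (∃ (i : Fin k) (v : Fin (NN d n + 1)) (b : Bool), x = .inl (i, v, b) ∧ y = qstate d n ∧
      ¬ d i ≤ v.val ∧ 1 ≤ v.val ∧ p = (.inl (i, v, !b), qstate d n)) ∨
    (∃ (i : Fin k) (s t : Fin (NN d n + 1)) (_ : 1 ≤ s.val) (_ : s.val < d i)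
      (_ : 1 ≤ t.val) (_ : t.val < d i), x = .inl (i, s, true) ∧
      y = .inl (i, t, false) ∧
      p = (.inl (i, ⟨s.val + t.val, by have := two_d_le_NN d n i; omega⟩, false),
        qstate d n)) := by
  rcases x with ⟨i, v, b⟩ | f <;> rcases y with ⟨j, w, b'⟩ | g
  · rcases b <;> rcases b' <;> simp only [act] at h
    · exact absurd h (by simp)
    · exact absurd h (by simp)
    · split at h
      · rename_i hcond
        obtain ⟨rfl, h1, h2, h3, h4⟩ := hcond
        right; right
        exact ⟨i, v, w, h1, h2, h3, h4, rfl, rfl, by injection h; subst_eqs; rfl⟩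
      · exact absurd h (by simp)
    · exact absurd h (by simp)
  · -- y = inr g
    simp only [act] at h
    split at h
    · rename_i hg
      split at h
      · rename_i hd
        left
        refine ⟨i, v, b, hd, rfl, ?_, ?_⟩
        · simp [qstate, hg]
        · injection h; subst_eqs; rfl
      · split at h
        · rename_i hd h1
          right; left
          refine ⟨i, v, b, rfl, by simp [qstate, hg], hd, h1, by injection h; subst_eqs; rfl⟩
        · exact absurd h (by simp)
    · exact absurd h (by simp)
  · exact absurd h (by simp [act])
  · exact absurd h (by simp [act])

end Proto

end Stmt17Aux

namespace Stmt17Aux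

open PP Finset
open scoped Classical

section Quant

variable {k : ℕ} (d n : Fin k → ℕ)

def wW (i : Fin k) : St d n → ℕ
  | .inl (j, v, _) => if j = i then v.val else 0
  | .inr _ => 0

def wA (i : Fin k) : St d n → ℕ
  | .inl (j, v, _) => if j = i ∧ 1 ≤ v.val then 1 else 0
  | .inr _ => 0

def wmu : St d n → ℕ
  | .inl (_, v, _) => 2 * v.val + (if 1 ≤ v.val then 1 else 0)
  | .inr _ => 0

@[simp] lemma wW_inl (i j : Fin k) (v : Fin (NN d n + 1)) (b : Bool) :
    wW d n i (.inl (j, v, b)) = if j = i then v.val else 0 := rfl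
@[simp] lemma wW_inr (i : Fin k) (f : Fin 3) : wW d n i (.inr f) = 0 := rfl
@[simp] lemma wA_inl (i j : Fin k) (v : Fin (NN d n + 1)) (b : Bool) :
    wA d n i (.inl (j, v, b)) = if j = i ∧ 1 ≤ v.val then 1 else 0 := rfl
@[simp] lemma wA_inr (i : Fin k) (f : Fin 3) : wA d n i (.inr f) = 0 := rfl
@[simp] lemma wmu_inl (j : Fin k) (v : Fin (NN d n + 1)) (b : Bool) :
    wmu d n (.inl (j, v, b)) = 2 * v.val + (if 1 ≤ v.val then 1 else 0) := rfl
@[simp] lemma wmu_inr (f : Fin 3) : wmu d n (.inr f) = 0 := rfl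

def Wt (i : Fin k) (c : St d n → ℕ) : ℕ := wsum (wW d n i) c
def ActC (i : Fin k) (c : St d n → ℕ) : ℕ := wsum (wA d n i) c
def mu (c : St d n → ℕ) : ℕ := wsum (wmu d n) c

/-- The reachability invariant: `E` records per-coordinate emission counts. -/
def Inv (m : Fin k → ℕ) (Q0 : ℕ) (c : St d n → ℕ) : Prop :=
  ∃ E : Fin k → ℕ, (∀ i, n i * m i = Wt d n i c + d i * E i) ∧
    c (ystate d n) = ∑ i, E i ∧ Q0 ≤ c (qstate d n) + c (ystate d n)

variable {d n}

lemma wsum_applyTx' {c : (St d n) → ℕ} {r : St d n × St d n} {x y : St d n}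
    {p : St d n × St d n}
    (h : Applicable c r) (hpr : pairConf r = pairConf (x, y))
    (hpd : pairConf (del d n r) = pairConf p) (ω : St d n → ℕ) :
    wsum ω (applyTx (del d n) r c) + (ω x + ω y) = wsum ω c + (ω p.1 + ω p.2) := by
  have hw := wsum_applyTx (δ := del d n) h ω
  rw [← wsum_pairConf ω r, ← wsum_pairConf ω (del d n r)] at hw
  rw [hpr, hpd, wsum_pairConf, wsum_pairConf] at hw
  exact hw

lemma applyTx_apply' {c : (St d n) → ℕ} {r : St d n × St d n} {x y : St d n}
    {p : St d n × St d n}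
    (h : Applicable c r) (hpr : pairConf r = pairConf (x, y))
    (hpd : pairConf (del d n r) = pairConf p) (w : St d n) :
    applyTx (del d n) r c w + pairConf (x, y) w = c w + pairConf p w := by
  have := applyTx_apply (δ := del d n) h w
  rw [hpr, hpd] at this
  · exact this

lemma pc_ty_y (z : Fin k × Fin (NN d n + 1) × Bool) :
    pairConf (Sum.inl z, ystate d n) (ystate d n) = 1 := by
  rw [pairConf_apply]; simp [ystate]

lemma pc_tq_y (z : Fin k × Fin (NN d n + 1) × Bool) :
    pairConf (Sum.inl z, qstate d n) (ystate d n) = 0 := by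
  rw [pairConf_apply]; simp [ystate, qstate]

lemma pc_ty_q (z : Fin k × Fin (NN d n + 1) × Bool) :
    pairConf (Sum.inl z, ystate d n) (qstate d n) = 0 := by
  rw [pairConf_apply]; simp [ystate, qstate]

lemma pc_tq_q (z : Fin k × Fin (NN d n + 1) × Bool) :
    pairConf (Sum.inl z, qstate d n) (qstate d n) = 1 := by
  rw [pairConf_apply]; simp [qstate]

lemma pc_tt_y (z z' : Fin k × Fin (NN d n + 1) × Bool) :
    pairConf (Sum.inl z, Sum.inl z') (ystate d n : St d n) = 0 := by
  rw [pairConf_apply]; simp [ystate]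

lemma pc_tt_q (z z' : Fin k × Fin (NN d n + 1) × Bool) :
    pairConf (Sum.inl z, Sum.inl z') (qstate d n : St d n) = 0 := by
  rw [pairConf_apply]; simp [qstate]

lemma count_le_of_applicable {c : (St d n) → ℕ} {r : St d n × St d n} {x y : St d n}
    (h : Applicable c r) (hpr : pairConf r = pairConf (x, y)) :
    1 ≤ c x ∧ 1 ≤ c y := by
  have hx := h x
  have hy := h y
  rw [hpr, pairConf_apply] at hx
  rw [hpr, pairConf_apply] at hy
  rw [if_pos rfl] at hx
  rw [if_pos (rfl : y = y)] at hy
  exact ⟨le_trans (Nat.le_add_right 1 _) hx, le_trans (Nat.le_add_left 1 _) hy⟩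

lemma sum_update_succ (E : Fin k → ℕ) (i : Fin k) :
    ∑ j, Function.update E i (E i + 1) j = (∑ j, E j) + 1 := by
  rw [Finset.sum_update_of_mem (Finset.mem_univ i), Finset.sdiff_singleton_eq_erase]
  rw [← Finset.add_sum_erase _ E (Finset.mem_univ i)]
  omega

/-- The invariant is preserved by every applicable transition. -/
lemma inv_step {m : Fin k → ℕ} {Q0 : ℕ} {c : St d n → ℕ} {r : St d n × St d n}
    (h : Applicable c r) (hI : Inv d n m Q0 c) :
    Inv d n m Q0 (applyTx (del d n) r c) := by
  rcases del_cases d n r with hid | ⟨x, y, p, hact, hpr, hpd⟩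
  · rw [applyTx_eq_self h hid]; exact hI
  obtain ⟨E, hE, hy, hq⟩ := hI
  obtain ⟨hcx, hcy⟩ := count_le_of_applicable h hpr
  rcases act_shapes d n hact with
    ⟨i, v, b, hv, rfl, rfl, rfl⟩ | ⟨i, v, b, rfl, rfl, hv, hv1, rfl⟩ |
    ⟨i, s, t, hs1, hs2, ht1, ht2, rfl, rfl, rfl⟩
  · -- emission
    refine ⟨Function.update E i (E i + 1), fun j => ?_, ?_, ?_⟩
    · have hw := wsum_applyTx' h hpr hpd (wW d n j)
      by_cases hij : i = j
      · subst hij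
        simp [qstate, ystate] at hw
        have h1 := hE i
        have h2 : d i * (E i + 1) = d i * E i + d i := by ring
        rw [Function.update_self]
        unfold Wt at h1 ⊢
        omega
      · have h1 := hE j
        simp [qstate, ystate, hij] at hw
        rw [Function.update_of_ne (Ne.symm hij)]
        unfold Wt at h1 ⊢
        omega
    · have hcnt := applyTx_apply' h hpr hpd (ystate d n)
      rw [sum_update_succ]
      rw [pc_tq_y, pc_ty_y] at hcnt
      omega
    · have hcnty := applyTx_apply' h hpr hpd (ystate d n)
      have hcntq := applyTx_apply' h hpr hpd (qstate d n)
      rw [pc_tq_y, pc_ty_y] at hcnty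
      rw [pc_tq_q, pc_ty_q] at hcntq
      omega
  · -- flip
    refine ⟨E, fun j => ?_, ?_, ?_⟩
    · have hw := wsum_applyTx' h hpr hpd (wW d n j)
      have h1 := hE j
      simp [qstate, ystate] at hw
      unfold Wt at h1 ⊢
      omega
    · have hcnt := applyTx_apply' h hpr hpd (ystate d n)
      rw [pc_tq_y, pc_tq_y] at hcnt
      omega
    · have hcnty := applyTx_apply' h hpr hpd (ystate d n)
      have hcntq := applyTx_apply' h hpr hpd (qstate d n)
      rw [pc_tq_y, pc_tq_y] at hcnty
      rw [pc_tq_q, pc_tq_q] at hcntq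
      omega
  · -- merge
    refine ⟨E, fun j => ?_, ?_, ?_⟩
    · have hw := wsum_applyTx' h hpr hpd (wW d n j)
      have h1 := hE j
      unfold Wt at h1 ⊢
      by_cases hij : i = j
      · subst hij
        simp [qstate, ystate] at hw
        omega
      · simp [qstate, ystate, hij] at hw
        omega
    · have hcnt := applyTx_apply' h hpr hpd (ystate d n)
      rw [pc_tt_y, pc_tq_y] at hcnt
      omega
    · have hcnty := applyTx_apply' h hpr hpd (ystate d n)
      have hcntq := applyTx_apply' h hpr hpd (qstate d n)
      rw [pc_tt_y, pc_tq_y] at hcnty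
      rw [pc_tt_q, pc_tq_q] at hcntq
      omega

lemma inv_reach {m : Fin k → ℕ} {Q0 : ℕ} {c c' : St d n → ℕ}
    (h : Reach (del d n) c c') (hI : Inv d n m Q0 c) : Inv d n m Q0 c' := by
  obtain ⟨p, hp⟩ := h
  induction hp with
  | nil => exact hI
  | cons r ha _ ih => exact ih (inv_step ha hI)

/-- If there is untapped value in some coordinate, fuel remains. -/
lemma qpos {m : Fin k → ℕ} {Q0 : ℕ} {c : St d n → ℕ} (hd : ∀ i, 1 ≤ d i)
    (hQ0 : ∑ j, n j * m j ≤ Q0) (hI : Inv d n m Q0 c) (i : Fin k)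
    (hcase : d i ≤ Wt d n i c ∨ (2 ≤ Wt d n i c ∧ 2 ≤ d i)) :
    1 ≤ c (qstate d n) := by
  obtain ⟨E, hE, hy, hq⟩ := hI
  have hlt : ∑ j, E j < ∑ j, n j * m j := by
    have hle : ∀ j ∈ Finset.univ, E j ≤ n j * m j := by
      intro j _
      have h1 := hE j
      have h2 : E j ≤ d j * E j := Nat.le_mul_of_pos_left _ (hd j)
      omega
    have hstrict : E i < n i * m i := by
      have h0 := hd i
      have h1 := hE i
      have h2 : E i ≤ d i * E i := Nat.le_mul_of_pos_left _ (hd i)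
      rcases hcase with hc | ⟨hc1, hc2⟩
      · omega
      · have h3 : 2 * E i ≤ d i * E i := Nat.mul_le_mul_right _ hc2
        omega
    exact Finset.sum_lt_sum hle ⟨i, Finset.mem_univ i, hstrict⟩
  omega

end Quant

end Stmt17Aux

namespace Stmt17Aux

open PP Finset
open scoped Classical

section Term

variable {k : ℕ} (d n : Fin k → ℕ)

/-- Terminal configurations: no token can emit, and at most one active token per
coordinate. -/
def Terminal (c : St d n → ℕ) : Prop :=
  (∀ (i : Fin k) (v : Fin (NN d n + 1)) (b : Bool), d i ≤ v.val → c (.inl (i, v, b)) = 0) ∧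
  ∀ i, ActC d n i c ≤ 1

variable {d n}

lemma act_emit (i : Fin k) (v : Fin (NN d n + 1)) (b : Bool) (hv : d i ≤ v.val) :
    act d n (.inl (i, v, b)) (qstate d n) =
      some (.inl (i, ⟨v.val - d i, by have := v.isLt; omega⟩, b), ystate d n) := by
  simp [act, qstate, ystate, hv]

lemma act_flip (i : Fin k) (v : Fin (NN d n + 1)) (b : Bool) (hv : ¬ d i ≤ v.val)
    (h1 : 1 ≤ v.val) :
    act d n (.inl (i, v, b)) (qstate d n) = some (.inl (i, v, !b), qstate d n) := by
  simp [act, qstate, hv, h1]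

lemma act_merge (i : Fin k) (s t : Fin (NN d n + 1)) (hs1 : 1 ≤ s.val) (hs2 : s.val < d i)
    (ht1 : 1 ≤ t.val) (ht2 : t.val < d i) :
    act d n (.inl (i, s, true)) (.inl (i, t, false)) =
      some (.inl (i, ⟨s.val + t.val, by have := two_d_le_NN d n i; omega⟩, false),
        qstate d n) := by
  simp [act, qstate, hs1, hs2, ht1, ht2]

lemma pc_tq_t (z z' : Fin k × Fin (NN d n + 1) × Bool) :
    pairConf (Sum.inl z, qstate d n) (Sum.inl z') = if z' = z then 1 else 0 := by
  rw [pairConf_apply]; simp [qstate]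

lemma pc_ty_t (z z' : Fin k × Fin (NN d n + 1) × Bool) :
    pairConf (Sum.inl z, ystate d n) (Sum.inl z') = if z' = z then 1 else 0 := by
  rw [pairConf_apply]; simp [ystate]

lemma pc_t_t (z1 z2 z' : Fin k × Fin (NN d n + 1) × Bool) :
    pairConf (Sum.inl z1, (Sum.inl z2 : St d n)) (Sum.inl z') =
      (if z' = z1 then 1 else 0) + (if z' = z2 then 1 else 0) := by
  rw [pairConf_apply]; simp

lemma le_wsum {Λ' : Type*} [Fintype Λ'] (ω c : Λ' → ℕ) (s : Λ') : ω s * c s ≤ wsum ω c :=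
  Finset.single_le_sum (f := fun t => ω t * c t) (fun t _ => Nat.zero_le _) (Finset.mem_univ s)

/-- Steps from terminal configurations keep them terminal and fix the output. -/
lemma term_step {c : St d n → ℕ} {r : St d n × St d n} (h : Applicable c r)
    (hT : Terminal d n c) :
    Terminal d n (applyTx (del d n) r c) ∧
      applyTx (del d n) r c (ystate d n) = c (ystate d n) := by
  rcases del_cases d n r with hid | ⟨x, y, p, hact, hpr, hpd⟩
  · rw [applyTx_eq_self h hid]; exact ⟨hT, rfl⟩
  obtain ⟨hcx, hcy⟩ := count_le_of_applicable h hpr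
  rcases act_shapes d n hact with
    ⟨i, v, b, hv, rfl, rfl, rfl⟩ | ⟨i, v, b, rfl, rfl, hv, hv1, rfl⟩ |
    ⟨i, s, t, hs1, hs2, ht1, ht2, rfl, rfl, rfl⟩
  · -- emission impossible
    exact absurd (hT.1 i v b hv) (by omega)
  · -- flip
    refine ⟨⟨?_, ?_⟩, ?_⟩
    · intro j w b' hw
      have hcnt := applyTx_apply' h hpr hpd (Sum.inl (j, w, b'))
      rw [pc_tq_t, pc_tq_t] at hcnt
      have hne1 : (j, w, b') ≠ (i, v, b) := by
        rintro ⟨rfl, rfl, rfl⟩; exact hv hw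
      have hne2 : (j, w, b') ≠ (i, v, !b) := by
        rintro h'
        injection h' with h1 h2
        injection h2 with h2 h3
        subst h1 h2
        exact hv hw
      rw [if_neg hne1, if_neg hne2] at hcnt
      have := hT.1 j w b' hw
      omega
    · intro j
      have hw := wsum_applyTx' h hpr hpd (wA d n j)
      have := hT.2 j
      unfold ActC at this ⊢
      simp only [wA_inl] at hw
      rw [show wA d n j (qstate d n) = 0 from rfl] at hw
      omega
    · have hcnt := applyTx_apply' h hpr hpd (ystate d n)
      rw [pc_tq_y, pc_tq_y] at hcnt
      omega
  · -- merge impossible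
    have hle : wsum (wA d n i) (pairConf (Sum.inl (i, s, true), Sum.inl (i, t, false))) ≤
        ActC d n i c := by
      rw [← hpr]
      exact wsum_le h
    rw [wsum_pairConf] at hle
    have e1 : wA d n i (Sum.inl (i, s, true)) = 1 := by simp [hs1]
    have e2 : wA d n i (Sum.inl (i, t, false)) = 1 := by simp [ht1]
    rw [e1, e2] at hle
    have := hT.2 i
    omega

lemma path_term {c o' : St d n → ℕ} {p : List (St d n × St d n)}
    (hp : PathFrom (del d n) c p o') (hT : Terminal d n c) :
    o' (ystate d n) = c (ystate d n) := by
  induction hp with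
  | nil => rfl
  | cons r ha _ ih =>
    obtain ⟨hT', hy⟩ := term_step ha hT
    rw [ih hT', hy]

lemma terminal_stable {c : St d n → ℕ} (hT : Terminal d n c) :
    Stable (del d n) (ystate d n) c := by
  intro o' ⟨p, hp⟩
  exact path_term hp hT

lemma terminal_Wt {c : St d n → ℕ} (hd : ∀ i, 1 ≤ d i) (hT : Terminal d n c) (i : Fin k) :
    Wt d n i c < d i := by
  have h1 : Wt d n i c ≤ (d i - 1) * ActC d n i c := by
    unfold Wt ActC wsum
    rw [Finset.mul_sum]
    apply Finset.sum_le_sum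
    intro s _
    rcases s with ⟨j, v, b⟩ | f
    · simp only [wW_inl, wA_inl]
      by_cases hij : j = i
      · subst hij
        by_cases h0 : 1 ≤ v.val
        · by_cases hbig : d j ≤ v.val
          · rw [hT.1 j v b hbig]
            omega
          · simp only [if_pos rfl]
            have hc : (j = j ∧ 1 ≤ v.val) := ⟨rfl, h0⟩
            simp only [h0, if_pos hc]
            have hv1 : v.val ≤ d j - 1 := by omega
            calc v.val * c (Sum.inl (j, v, b)) ≤ (d j - 1) * c (Sum.inl (j, v, b)) :=
                  Nat.mul_le_mul_right _ hv1
              _ = (d j - 1) * (1 * c (Sum.inl (j, v, b))) := by ring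
        · have : v.val = 0 := by omega
          simp [this]
      · simp [hij]
    · simp
  have h2 := hT.2 i
  have h3 := hd i
  have h4 : (d i - 1) * ActC d n i c ≤ (d i - 1) * 1 := Nat.mul_le_mul_left _ h2
  omega

end Term

end Stmt17Aux

namespace Stmt17Aux

open PP Finset
open scoped Classical

section Build

variable {k : ℕ} {d n : Fin k → ℕ}

lemma merge_from {m : Fin k → ℕ} {Q0 : ℕ} {c1 : St d n → ℕ} (hI1 : Inv d n m Q0 c1)
    (i : Fin k) {v1 v2 : Fin (NN d n + 1)}
    (h1 : 1 ≤ v1.val) (hl1 : v1.val < d i) (h2 : 1 ≤ v2.val) (hl2 : v2.val < d i)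
    (hu : 1 ≤ c1 (.inl (i, v1, true))) (ht : 1 ≤ c1 (.inl (i, v2, false))) :
    ∃ c2, Reach (del d n) c1 c2 ∧ Inv d n m Q0 c2 ∧ mu d n c2 < mu d n c1 := by
  have hne : (Sum.inl (i, v1, true) : St d n) ≠ Sum.inl (i, v2, false) := by simp
  have happ := applicable_of_ne hne hu ht
  have hact := act_merge i v1 v2 h1 hl1 h2 hl2
  have hdel := del_of_act d n hact
  refine ⟨_, reach_step happ, inv_step happ hI1, ?_⟩
  have hmu := wsum_applyTx (δ := del d n) happ (wmu d n)
  rw [hdel] at hmu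
  dsimp only at hmu
  simp only [wmu_inl] at hmu
  rw [show wmu d n (qstate d n) = 0 from rfl] at hmu
  unfold mu
  split_ifs at hmu <;> omega

lemma flip_from {m : Fin k → ℕ} {Q0 : ℕ} {c1 : St d n → ℕ} (hI1 : Inv d n m Q0 c1)
    (i : Fin k) {v : Fin (NN d n + 1)} (b : Bool)
    (h1 : 1 ≤ v.val) (hl : v.val < d i)
    (hx : 1 ≤ c1 (.inl (i, v, b))) (hq : 1 ≤ c1 (qstate d n)) :
    ∃ c2, Reach (del d n) c1 c2 ∧ Inv d n m Q0 c2 ∧ mu d n c2 = mu d n c1 ∧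
      ∀ z : Fin k × Fin (NN d n + 1) × Bool,
        c2 (.inl z) + (if z = (i, v, b) then 1 else 0) =
          c1 (.inl z) + (if z = (i, v, !b) then 1 else 0) := by
  have hne : (Sum.inl (i, v, b) : St d n) ≠ qstate d n := by simp [qstate]
  have happ := applicable_of_ne hne hx hq
  have hact := act_flip i v b (by omega) h1
  have hdel := del_of_act d n hact
  refine ⟨_, reach_step happ, inv_step happ hI1, ?_, ?_⟩
  · have hmu := wsum_applyTx (δ := del d n) happ (wmu d n)
    rw [hdel] at hmu
    dsimp only at hmu
    simp only [wmu_inl] at hmu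
    rw [show wmu d n (qstate d n) = 0 from rfl] at hmu
    unfold mu
    omega
  · intro z
    have hcnt := applyTx_apply (δ := del d n) happ (Sum.inl z)
    rw [hdel] at hcnt
    rw [pc_tq_t, pc_tq_t] at hcnt
    exact hcnt

lemma wA_pos {i : Fin k} {s : St d n} (h : 1 ≤ wA d n i s) :
    ∃ v b, s = .inl (i, v, b) ∧ 1 ≤ v.val := by
  rcases s with ⟨j, v, b⟩ | f
  · simp only [wA_inl] at h
    split_ifs at h with hc
    · exact ⟨v, b, by rw [hc.1], hc.2⟩
    · omega
  · exact absurd h (by simp)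

lemma make_step (hd : ∀ i, 1 ≤ d i) {m : Fin k → ℕ} {Q0 : ℕ}
    (hQ0 : ∑ j, n j * m j ≤ Q0) {c : St d n → ℕ}
    (hI : Inv d n m Q0 c) (hNT : ¬ Terminal d n c) :
    ∃ c', Reach (del d n) c c' ∧ Inv d n m Q0 c' ∧ mu d n c' < mu d n c := by
  by_cases hA : ∀ (i : Fin k) (v : Fin (NN d n + 1)) (b : Bool), d i ≤ v.val →
      c (.inl (i, v, b)) = 0
  case neg =>
    push_neg at hA
    obtain ⟨i, v, b, hv, hc0⟩ := hA
    have hcx : 1 ≤ c (.inl (i, v, b)) := by omega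
    have hWt : d i ≤ Wt d n i c := by
      have h := le_wsum (wW d n i) c (.inl (i, v, b))
      rw [show wW d n i (.inl (i, v, b)) = v.val from by simp] at h
      calc d i ≤ v.val := hv
        _ = v.val * 1 := by ring
        _ ≤ v.val * c (.inl (i, v, b)) := Nat.mul_le_mul_left _ hcx
        _ ≤ Wt d n i c := h
    have hq1 := qpos hd hQ0 hI i (Or.inl hWt)
    have hne : (Sum.inl (i, v, b) : St d n) ≠ qstate d n := by simp [qstate]
    have happ := applicable_of_ne hne hcx hq1
    have hact := act_emit i v b hv
    have hdel := del_of_act d n hact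
    refine ⟨_, reach_step happ, inv_step happ hI, ?_⟩
    have hmu := wsum_applyTx (δ := del d n) happ (wmu d n)
    rw [hdel] at hmu
    dsimp only at hmu
    simp only [wmu_inl] at hmu
    rw [show wmu d n (qstate d n) = 0 from rfl,
      show wmu d n (ystate d n) = 0 from rfl] at hmu
    have hdi := hd i
    unfold mu
    split_ifs at hmu <;> omega
  case pos =>
    have hB : ¬ ∀ i, ActC d n i c ≤ 1 := fun hB => hNT ⟨hA, hB⟩
    push_neg at hB
    obtain ⟨i, hi⟩ := hB
    have h2 : 2 ≤ ActC d n i c := hi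
    have hω : ∀ s : St d n, wA d n i s ≤ 1 := by
      intro s
      rcases s with ⟨j, w, b⟩ | f
      · simp only [wA_inl]; split_ifs <;> omega
      · simp
    obtain ⟨s, t, hws, hwt, happst⟩ := exists_pair_of_two_le_wsum hω h2
    obtain ⟨v1, b1, rfl, hv1⟩ := wA_pos hws
    obtain ⟨v2, b2, rfl, hv2⟩ := wA_pos hwt
    obtain ⟨hcs, hct⟩ := count_le_of_applicable happst rfl
    have hlt1 : v1.val < d i := by
      by_contra hge
      push_neg at hge
      have := hA i v1 b1 hge
      omega
    have hlt2 : v2.val < d i := by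
      by_contra hge
      push_neg at hge
      have := hA i v2 b2 hge
      omega
    have hd2 : 2 ≤ d i := by omega
    have hWt2 : 2 ≤ Wt d n i c := by
      have hle : wsum (wW d n i) (pairConf (Sum.inl (i, v1, b1), Sum.inl (i, v2, b2))) ≤
          Wt d n i c := wsum_le happst
      rw [wsum_pairConf] at hle
      rw [show wW d n i (Sum.inl (i, v1, b1) : St d n) = v1.val from by simp,
        show wW d n i (Sum.inl (i, v2, b2) : St d n) = v2.val from by simp] at hle
      omega
    have hq1 := qpos hd hQ0 hI i (Or.inr ⟨hWt2, hd2⟩)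
    -- extra count when the two tokens coincide
    have hdouble : ((i, v1, b1) : Fin k × Fin (NN d n + 1) × Bool) = (i, v2, b2) →
        2 ≤ c (.inl (i, v1, b1)) := by
      intro hz
      have hp : pairConf (Sum.inl (i, v1, b1), Sum.inl (i, v2, b2)) (Sum.inl (i, v1, b1)) ≤
          c (Sum.inl (i, v1, b1)) := happst (Sum.inl (i, v1, b1))
      rw [pc_t_t] at hp
      rw [if_pos rfl, if_pos hz] at hp
      omega
    rcases hb1 : b1 <;> rcases hb2 : b2 <;> subst hb1 <;> subst hb2
    · -- both uncharged: flip the first up, then merge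
      obtain ⟨c2, hr2, hI2, hmu2, hcnt2⟩ := flip_from hI i (b := false) hv1 hlt1 hcs hq1
      have hu2 : 1 ≤ c2 (.inl (i, v1, true)) := by
        have h := hcnt2 (i, v1, true)
        rw [if_neg (by simp), if_pos (by simp)] at h
        omega
      have ht2 : 1 ≤ c2 (.inl (i, v2, false)) := by
        have h := hcnt2 (i, v2, false)
        by_cases hz : ((i, v2, false) : Fin k × Fin (NN d n + 1) × Bool) = (i, v1, false)
        · have h2c : 2 ≤ c (Sum.inl (i, v2, false)) := by
            rw [show (Sum.inl (i, v2, false) : St d n) = Sum.inl (i, v1, false) from by rw [hz]]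
            exact hdouble hz.symm
          rw [if_pos hz, if_neg (by simp)] at h
          omega
        · rw [if_neg hz, if_neg (by simp)] at h
          omega
      obtain ⟨c3, hr3, hI3, hmu3⟩ := merge_from hI2 i hv1 hlt1 hv2 hlt2 hu2 ht2
      exact ⟨c3, reach_trans hr2 hr3, hI3, by omega⟩
    · -- second charged, first not: merge directly
      obtain ⟨c2, hr2, hI2, hmu2⟩ := merge_from hI i hv2 hlt2 hv1 hlt1 hct hcs
      exact ⟨c2, hr2, hI2, hmu2⟩
    · -- first charged, second not: merge directly
      obtain ⟨c2, hr2, hI2, hmu2⟩ := merge_from hI i hv1 hlt1 hv2 hlt2 hcs hct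
      exact ⟨c2, hr2, hI2, hmu2⟩
    · -- both charged: flip the first down, then merge
      obtain ⟨c2, hr2, hI2, hmu2, hcnt2⟩ := flip_from hI i (b := true) hv1 hlt1 hcs hq1
      have hu2 : 1 ≤ c2 (.inl (i, v2, true)) := by
        have h := hcnt2 (i, v2, true)
        by_cases hz : ((i, v2, true) : Fin k × Fin (NN d n + 1) × Bool) = (i, v1, true)
        · have h2c : 2 ≤ c (Sum.inl (i, v2, true)) := by
            rw [show (Sum.inl (i, v2, true) : St d n) = Sum.inl (i, v1, true) from by rw [hz]]
            exact hdouble hz.symm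
          rw [if_pos hz, if_neg (by simp)] at h
          omega
        · rw [if_neg hz, if_neg (by simp)] at h
          omega
      have ht2 : 1 ≤ c2 (.inl (i, v1, false)) := by
        have h := hcnt2 (i, v1, false)
        rw [if_neg (by simp), if_pos (by simp)] at h
        omega
      obtain ⟨c3, hr3, hI3, hmu3⟩ := merge_from hI2 i hv2 hlt2 hv1 hlt1 hu2 ht2
      exact ⟨c3, reach_trans hr2 hr3, hI3, by omega⟩

lemma build (hd : ∀ i, 1 ≤ d i) {m : Fin k → ℕ} {Q0 : ℕ}
    (hQ0 : ∑ j, n j * m j ≤ Q0) :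
    ∀ (M : ℕ) (c : St d n → ℕ), mu d n c ≤ M → Inv d n m Q0 c →
      ∃ o, Reach (del d n) c o ∧ Terminal d n o ∧ Inv d n m Q0 o := by
  intro M
  induction M with
  | zero =>
    intro c hM hI
    by_cases hT : Terminal d n c
    · exact ⟨c, reach_refl _ _, hT, hI⟩
    · obtain ⟨c', _, _, hlt⟩ := make_step hd hQ0 hI hT
      omega
  | succ M ih =>
    intro c hM hI
    by_cases hT : Terminal d n c
    · exact ⟨c, reach_refl _ _, hT, hI⟩
    · obtain ⟨c', hr, hI', hlt⟩ := make_step hd hQ0 hI hT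
      obtain ⟨o, hro, hTo, hIo⟩ := ih c' (by omega) hI'
      exact ⟨o, reach_trans hr hro, hTo, hIo⟩

end Build

end Stmt17Aux

namespace Stmt17Aux

open PP Finset
open scoped Classical

section Final

variable {k : ℕ} {d n : Fin k → ℕ}

/-- The designated input states. -/
def inputSt (d n : Fin k → ℕ) (j : Fin k) : St d n :=
  .inl (j, ⟨n j, Nat.lt_succ_of_le (n_le_NN d n j)⟩, false)

lemma terminal_y (hd : ∀ i, 1 ≤ d i) {m : Fin k → ℕ} {Q0 : ℕ} {o : St d n → ℕ}
    (hI : Inv d n m Q0 o) (hT : Terminal d n o) :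
    o (ystate d n) = ∑ i, (n i * m i) / d i := by
  obtain ⟨E, hE, hy, _⟩ := hI
  rw [hy]
  apply Finset.sum_congr rfl
  intro i _
  have hW := terminal_Wt hd hT i
  have h1 := hE i
  have h2 : (Wt d n i o + d i * E i) / d i = E i := by
    rw [Nat.add_mul_div_left _ _ (hd i), Nat.div_eq_of_lt hW]
    omega
  rw [h1, h2]

lemma Wt_init {m : Fin k → ℕ} {ini : St d n → ℕ}
    (hin : ∀ j, ini (inputSt d n j) = m j)
    (hz : ∀ s, s ∉ Set.range (inputSt d n) → s ≠ qstate d n → s ≠ astate d n → ini s = 0)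
    (i : Fin k) : Wt d n i ini = n i * m i := by
  unfold Wt wsum
  rw [Fintype.sum_sum_type]
  have hinr : ∑ f : Fin 3, wW d n i (Sum.inr f) * ini (Sum.inr f) = 0 := by simp
  rw [hinr, add_zero]
  rw [Finset.sum_eq_single
    ((i, ⟨n i, Nat.lt_succ_of_le (n_le_NN d n i)⟩, false) : Fin k × Fin (NN d n + 1) × Bool)]
  · have h := hin i
    unfold inputSt at h
    rw [h]
    simp
  · rintro ⟨j, v, b⟩ _ hzne
    by_cases hr : (Sum.inl (j, v, b) : St d n) ∈ Set.range (inputSt d n)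
    · obtain ⟨j', hj'⟩ := hr
      rw [← hj', hin j']
      by_cases hji : j' = i
      · exfalso
        apply hzne
        rw [hji] at hj'
        unfold inputSt at hj'
        injection hj' with h'
        exact h'.symm
      · unfold inputSt
        simp [hji]
    · rw [hz _ hr (by simp [qstate]) (by simp [astate]), mul_zero]
  · intro hmem
    exact absurd (Finset.mem_univ _) hmem

end Final

end Stmt17Aux

open Finset

/-- Every ℚ≥0-linear function `f(m) = Σᵢ ⌊cᵢ·m(i)⌋` (with `cᵢ ∈ ℚ`, `cᵢ ≥ 0`) is
stably `E`-approximated, with `E` the identity, by some function-approximating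
leaderless population protocol: there are a finite state set `Λ`, a (symmetric)
transition function `δ`, distinct input states, an output state `y`, a quiescent
state `q ∉ Σ`, an approximation state `a ∉ Σ ∪ {y, q}`, a constant `a0` and a
linearly bounded `q0 : ℕ^{k+1} → ℕ` such that from every valid initial
configuration `i` (input counts `m`, `i(a) ≥ a0`, `i(q) ≥ q0(m, i(a))`, all other
states absent), every reachable configuration can reach a stable configuration
`o` with `|o(y) − f(m)| ≤ i(a)`. -/
theorem stmt17 (k : ℕ) (c : Fin k → ℚ) (hc : ∀ i, 0 ≤ c i) :
    ∃ (Λ : Type) (_ : Fintype Λ) (δ : Λ × Λ → Λ × Λ)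
      (inputs : Fin k → Λ) (y q a : Λ),
      PP.Symmetric δ ∧
      Function.Injective inputs ∧
      q ∉ Set.range inputs ∧
      a ∉ Set.range inputs ∧ a ≠ y ∧ a ≠ q ∧
      ∃ (a0 : ℕ) (q0 : (Fin k → ℕ) → ℕ → ℕ) (C : ℕ),
        (∀ (m : Fin k → ℕ) (A : ℕ), q0 m A ≤ C * ((∑ i, m i) + A)) ∧
        ∀ (m : Fin k → ℕ) (init : Λ → ℕ),
          (∀ j, init (inputs j) = m j) →
          a0 ≤ init a →
          q0 m (init a) ≤ init q →
          (∀ s, s ∉ Set.range inputs → s ≠ q → s ≠ a → init s = 0) →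
          ∀ cc : Λ → ℕ, PP.Reach δ init cc →
            ∃ oc : Λ → ℕ, PP.Reach δ cc oc ∧ PP.Stable δ y oc ∧
              |(oc y : ℤ) - ∑ i, ⌊c i * (m i : ℚ)⌋| ≤ (init a : ℤ) := by
  classical
  open Stmt17Aux in
  set d : Fin k → ℕ := fun i => (c i).den with hd_def
  set n : Fin k → ℕ := fun i => (c i).num.toNat with hn_def
  have hd : ∀ i, 1 ≤ d i := fun i => (c i).pos
  have hfloor : ∀ (m : Fin k → ℕ) (i : Fin k),
      ⌊c i * (m i : ℚ)⌋ = ((n i * m i) / d i : ℕ) := by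
    intro m i
    have hnum : ((n i : ℤ) : ℚ) = ((c i).num : ℚ) := by
      have := Int.toNat_of_nonneg (Rat.num_nonneg.mpr (hc i))
      rw [hn_def]
      exact_mod_cast congrArg (fun z : ℤ => (z : ℚ)) this
    have h1 : c i * (m i : ℚ) = (((n i * m i : ℕ) : ℤ) : ℚ) / ((d i : ℕ) : ℚ) := by
      rw [← Rat.num_div_den (c i), div_mul_eq_mul_div]
      congr 1
      push_cast
      have hnum' : ((n i : ℚ)) = ((c i).num : ℚ) := by exact_mod_cast hnum
      rw [hnum']
    rw [h1, Rat.floor_intCast_div_natCast, ← Int.natCast_div]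
  refine ⟨St d n, inferInstance, del d n, inputSt d n, ystate d n, qstate d n, astate d n,
    del_symmetric d n, ?_, ?_, ?_, ?_, ?_,
    0, (fun m _ => ∑ i, n i * m i), (∑ i, n i), ?_, ?_⟩
  · intro a b h
    unfold inputSt at h
    injection h with h'
    exact congrArg (fun z => z.1) h'
  · rintro ⟨j, hj⟩
    unfold inputSt at hj
    simp [qstate] at hj
  · rintro ⟨j, hj⟩
    unfold inputSt at hj
    simp [astate] at hj
  · simp [astate, ystate]
  · simp [astate, qstate]
  · intro m A
    calc ∑ i, n i * m i ≤ ∑ i, n i * (∑ j, m j) := by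
          apply Finset.sum_le_sum
          intro i _
          exact Nat.mul_le_mul_left _
            (Finset.single_le_sum (f := m) (fun _ _ => Nat.zero_le _) (Finset.mem_univ i))
      _ = (∑ i, n i) * (∑ j, m j) := by rw [← Finset.sum_mul]
      _ ≤ (∑ i, n i) * ((∑ j, m j) + A) := Nat.mul_le_mul_left _ (by omega)
  · intro m init hin _ hq0le hzero cc hreach
    have hQ0 : ∑ j, n j * m j ≤ init (qstate d n) := hq0le
    have hIinit : Inv d n m (init (qstate d n)) init := by
      refine ⟨fun _ => 0, ?_, ?_, ?_⟩
      · intro i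
        rw [Wt_init hin hzero i]
        simp
      · have hy0 : init (ystate d n) = 0 := by
          apply hzero
          · rintro ⟨j, hj⟩
            unfold inputSt at hj
            simp [ystate] at hj
          · simp [ystate, qstate]
          · simp [ystate, astate]
        rw [hy0]
        simp
      · exact Nat.le_add_right _ _
    have hIcc := inv_reach hreach hIinit
    obtain ⟨o, hro, hTo, hIo⟩ := build hd hQ0 (mu d n cc) cc le_rfl hIcc
    refine ⟨o, hro, terminal_stable hTo, ?_⟩
    have hoy := terminal_y hd hIo hTo
    have hsum : ∑ i, ⌊c i * (m i : ℚ)⌋ = ((∑ i, (n i * m i) / d i : ℕ) : ℤ) := by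
      rw [Nat.cast_sum]
      exact Finset.sum_congr rfl (fun i _ => hfloor m i)
    rw [hoy, hsum, sub_self, abs_zero]
    exact Int.ofNat_nonneg _
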